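/- Let p be a prime, m, n ≥ 1. The number of pairs of weakly increasing tuples 0 < a₁ ≤ ⋯ ≤ a_m < p and 0 < b₁ ≤ ⋯ ≤ b_n < p such that a_i + b_j is not divisible by p for all i, j, equals ∑_{l=1}^{min(n, p-2)} C(p-1, l) · C(n-1, n-l) · C(m + p - l - 2, m). -/

import Mathlib

open Finset
open scoped Classical


/-- Monotone maps `Fin m → α` are equivalent to `Sym α m`. -/
noncomputable def monoEquivSym (α : Type*) [LinearOrder α] (m : ℕ) :
    {f : Fin m → α // Monotone f} ≃ Sym α m where
  toFun f := ⟨(List.ofFn f.1 : Multiset α), by simp⟩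
  invFun s := ⟨fun i => (s.1.sort (· ≤ ·)).get (Fin.cast (by simp [s.2]) i), by
    intro i j hij
    exact (Multiset.pairwise_sort _ _).rel_get_of_le (Fin.le_def.mpr (Fin.le_def.mp hij))⟩
  left_inv f := by
    ext i
    dsimp only
    have h1 : Multiset.sort (↑(List.ofFn f.1) : Multiset α) (· ≤ ·) = List.ofFn f.1 := by
      refine List.Perm.eq_of_pairwise' (Multiset.pairwise_sort _ _) f.2.sortedLE_ofFn.pairwise ?_
      exact Multiset.coe_eq_coe.mp (by rw [Multiset.sort_eq])
    have h2 := List.get_of_eq h1 (Fin.cast (by simp) i)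
    rw [h2, List.get_ofFn]
    simp
    rfl
  right_inv s := by
    refine Subtype.ext ?_
    dsimp only
    have : List.ofFn (fun i : Fin m => (s.1.sort (· ≤ ·)).get (Fin.cast (by simp [s.2]) i))
        = Multiset.sort s.1 (· ≤ ·) := by
      apply List.ext_get (by simp [s.2])
      intro i h1 h2
      simp [List.get_ofFn]
      rfl
    rw [this, Multiset.sort_eq]

lemma card_monotone_maps (α : Type*) [LinearOrder α] [Fintype α] (m : ℕ) :
    Fintype.card {f : Fin m → α // Monotone f} = (Fintype.card α + m - 1).choose m := by
  rw [Fintype.card_congr (monoEquivSym α m), Sym.card_sym_eq_choose]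


section Surj
variable {n l : ℕ}

def jumpSet (f : Fin (n+1) → Fin (l+1)) : Finset (Fin n) :=
  univ.filter (fun i => f i.castSucc < f i.succ)

def cnt (T : Finset (Fin n)) (i : ℕ) : ℕ := (T.filter (fun t => t.val < i)).card

lemma cnt_zero (T : Finset (Fin n)) : cnt T 0 = 0 := by
  simp [cnt]

lemma cnt_succ (T : Finset (Fin n)) (i : ℕ) (hi : i < n) :
    cnt T (i + 1) = cnt T i + if ⟨i, hi⟩ ∈ T then 1 else 0 := by
  unfold cnt
  have h : (T.filter (fun t => t.val < i + 1))
      = (T.filter (fun t => t.val < i)) ∪ (T.filter (fun t => t = ⟨i, hi⟩)) := by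
    rw [← filter_or]
    apply filter_congr
    intro t _
    simp [Nat.lt_succ_iff_lt_or_eq, Fin.ext_iff, Nat.le_iff_lt_or_eq]
  rw [h, card_union_of_disjoint]
  · congr 1
    by_cases hm : (⟨i, hi⟩ : Fin n) ∈ T
    · rw [if_pos hm]
      rw [filter_eq']
      simp [hm]
    · rw [if_neg hm, filter_eq']
      simp [hm]
  · rw [disjoint_left]
    intro a ha hb
    simp only [mem_filter] at ha hb
    obtain ⟨-, rfl⟩ := hb
    simpa using ha.2

lemma cnt_le_card (T : Finset (Fin n)) (i : ℕ) : cnt T i ≤ T.card :=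
  card_le_card (filter_subset _ _)

lemma cnt_top (T : Finset (Fin n)) : cnt T n = T.card := by
  unfold cnt
  rw [filter_true_of_mem]
  intro t _
  exact t.isLt

lemma cnt_mono (T : Finset (Fin n)) : Monotone (cnt T) := by
  intro i j hij
  apply card_le_card
  intro t ht
  simp only [mem_filter] at *
  exact ⟨ht.1, lt_of_lt_of_le ht.2 hij⟩

/-- From a subset of card l, the monotone map counting jumps. -/
def fdef (T : Finset (Fin n)) (hT : T.card = l) (i : Fin (n + 1)) : Fin (l + 1) :=
  ⟨cnt T i, Nat.lt_succ_of_le (hT ▸ cnt_le_card T i)⟩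

lemma fdef_mono (T : Finset (Fin n)) (hT : T.card = l) : Monotone (fdef T hT) := by
  intro i j hij
  exact cnt_mono T (by exact_mod_cast hij)

lemma surj_of_steps (f : Fin (n + 1) → Fin (l + 1)) (hmono : Monotone f)
    (h0 : (f 0 : ℕ) = 0) (hlast : (f (Fin.last n) : ℕ) = l)
    (hstep : ∀ i : Fin n, (f i.succ : ℕ) ≤ (f i.castSucc : ℕ) + 1) :
    Function.Surjective f := by
  intro v
  -- consider the minimal i with v ≤ f i
  have hne : (univ.filter (fun i : Fin (n+1) => (v : ℕ) ≤ (f i : ℕ))).Nonempty := by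
    refine ⟨Fin.last n, ?_⟩
    simp only [mem_filter, mem_univ, true_and]
    rw [hlast]
    omega
  obtain ⟨i, hi, hmin⟩ := exists_min_image _ (fun i => i) hne
  simp only [mem_filter, mem_univ, true_and] at hi
  refine ⟨i, ?_⟩
  rcases Fin.eq_zero_or_eq_succ i with h | ⟨j, rfl⟩
  · subst h
    apply Fin.ext
    omega
  · have h2 : ¬ ((v : ℕ) ≤ (f j.castSucc : ℕ)) := by
      intro hc
      have := hmin j.castSucc (by simp only [mem_filter, mem_univ, true_and]; exact hc)
      exact absurd this (not_le.mpr (Fin.castSucc_lt_succ (i := j)))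
    have h3 := hstep j
    apply Fin.ext
    omega

lemma mono_surj_step (f : Fin (n + 1) → Fin (l + 1)) (hmono : Monotone f)
    (hsurj : Function.Surjective f) (i : Fin n) :
    (f i.succ : ℕ) ≤ (f i.castSucc : ℕ) + 1 := by
  by_contra hc
  push_neg at hc
  have hlt : (f i.castSucc : ℕ) + 1 < l + 1 := lt_of_le_of_lt (by omega) (f i.succ).isLt
  obtain ⟨k, hk⟩ := hsurj ⟨(f i.castSucc : ℕ) + 1, hlt⟩
  have hkv : (f k : ℕ) = (f i.castSucc : ℕ) + 1 := by rw [hk]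
  rcases le_or_gt k i.castSucc with h | h
  · have := hmono h
    rw [Fin.le_def] at this
    omega
  · have : i.succ ≤ k := by
      rw [Fin.le_def, Fin.val_succ]
      rw [Fin.lt_def] at h
      simp only [Fin.coe_castSucc] at h
      omega
    have := hmono this
    rw [Fin.le_def] at this
    omega

lemma mono_surj_zero (f : Fin (n + 1) → Fin (l + 1)) (hmono : Monotone f)
    (hsurj : Function.Surjective f) : (f 0 : ℕ) = 0 := by
  obtain ⟨k, hk⟩ := hsurj 0
  have := hmono (Fin.zero_le k)
  rw [Fin.le_def, hk] at this
  simpa using this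

lemma mono_surj_last (f : Fin (n + 1) → Fin (l + 1)) (hmono : Monotone f)
    (hsurj : Function.Surjective f) : (f (Fin.last n) : ℕ) = l := by
  obtain ⟨k, hk⟩ := hsurj (Fin.last l)
  have := hmono (Fin.le_last k)
  rw [Fin.le_def, hk] at this
  simp only [Fin.val_last] at this
  have := (f (Fin.last n)).isLt
  omega

/-- key: a monotone surjection equals the jump-count function of its jump set. -/
lemma mono_surj_eq_cnt (f : Fin (n + 1) → Fin (l + 1)) (hmono : Monotone f)
    (hsurj : Function.Surjective f) :
    ∀ k (hk : k ≤ n), (f ⟨k, Nat.lt_succ_of_le hk⟩ : ℕ) = cnt (jumpSet f) k := by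
  intro k
  induction k with
  | zero =>
    intro _
    rw [cnt_zero]
    exact mono_surj_zero f hmono hsurj
  | succ k ih =>
    intro hk
    have hkn : k < n := hk
    rw [cnt_succ _ k hkn, ← ih (le_of_lt hkn)]
    have hcs : (⟨k, Nat.lt_succ_of_le (le_of_lt hkn)⟩ : Fin (n+1)) = (⟨k, hkn⟩ : Fin n).castSucc := rfl
    have hsc : (⟨k+1, Nat.lt_succ_of_le hk⟩ : Fin (n+1)) = (⟨k, hkn⟩ : Fin n).succ := rfl
    rw [hcs, hsc]
    have hstep := mono_surj_step f hmono hsurj ⟨k, hkn⟩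
    have hmle := hmono (le_of_lt (Fin.castSucc_lt_succ (i := (⟨k, hkn⟩ : Fin n))))
    rw [Fin.le_def] at hmle
    by_cases hj : (⟨k, hkn⟩ : Fin n) ∈ jumpSet f
    · rw [if_pos hj]
      have : f (⟨k, hkn⟩ : Fin n).castSucc < f (⟨k, hkn⟩ : Fin n).succ := by
        simpa [jumpSet] using hj
      rw [Fin.lt_def] at this
      omega
    · rw [if_neg hj]
      have : ¬ (f (⟨k, hkn⟩ : Fin n).castSucc < f (⟨k, hkn⟩ : Fin n).succ) := by
        simpa [jumpSet] using hj
      rw [Fin.lt_def] at this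
      omega

lemma jumpSet_card (f : Fin (n + 1) → Fin (l + 1)) (hmono : Monotone f)
    (hsurj : Function.Surjective f) : (jumpSet f).card = l := by
  have h := mono_surj_eq_cnt f hmono hsurj n le_rfl
  rw [cnt_top] at h
  have e : (⟨n, Nat.lt_succ_of_le le_rfl⟩ : Fin (n+1)) = Fin.last n := rfl
  rw [e, mono_surj_last f hmono hsurj] at h
  exact h.symm

lemma jumpSet_fdef (T : Finset (Fin n)) (hT : T.card = l) : jumpSet (fdef T hT) = T := by
  ext i
  simp only [jumpSet, mem_filter, mem_univ, true_and]
  have h1 : (fdef T hT i.castSucc : ℕ) = cnt T i.val := rfl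
  have h2 : (fdef T hT i.succ : ℕ) = cnt T (i.val + 1) := rfl
  rw [Fin.lt_def, h1, h2, cnt_succ T i.val i.isLt]
  by_cases hm : i ∈ T
  · have : (⟨i.val, i.isLt⟩ : Fin n) = i := rfl
    rw [this]
    simp [hm]
  · have : (⟨i.val, i.isLt⟩ : Fin n) = i := rfl
    rw [this]
    simp [hm]

lemma fdef_surj (T : Finset (Fin n)) (hT : T.card = l) : Function.Surjective (fdef T hT) := by
  apply surj_of_steps _ (fdef_mono T hT)
  · show cnt T ((0 : Fin (n+1)) : ℕ) = 0
    rw [Fin.val_zero, cnt_zero]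
  · show cnt T ((Fin.last n : Fin (n+1)) : ℕ) = l
    rw [Fin.val_last, cnt_top, hT]
  · intro i
    show cnt T (i.val + 1) ≤ cnt T i.val + 1
    rw [cnt_succ T i.val i.isLt]
    split <;> omega

lemma card_mono_surj (n l : ℕ) :
    (univ.filter fun f : Fin (n+1) → Fin (l+1) =>
      Monotone f ∧ Function.Surjective f).card = n.choose l := by
  have key : (univ.filter fun f : Fin (n+1) → Fin (l+1) =>
      Monotone f ∧ Function.Surjective f).card
      = (powersetCard l (univ : Finset (Fin n))).card := by
    refine card_bij (fun f _ => jumpSet f) ?_ ?_ ?_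
    · intro f hf
      simp only [mem_filter, mem_univ, true_and] at hf
      rw [mem_powersetCard]
      exact ⟨subset_univ _, jumpSet_card f hf.1 hf.2⟩
    · intro f hf g hg hfg
      simp only [mem_filter, mem_univ, true_and] at hf hg
      funext i
      have h1 := mono_surj_eq_cnt f hf.1 hf.2 i.val (Nat.le_of_lt_succ i.isLt)
      have h2 := mono_surj_eq_cnt g hg.1 hg.2 i.val (Nat.le_of_lt_succ i.isLt)
      apply Fin.ext
      have e : (⟨i.val, Nat.lt_succ_of_le (Nat.le_of_lt_succ i.isLt)⟩ : Fin (n+1)) = i := rfl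
      rw [e] at h1 h2
      rw [h1, h2]
      rw [hfg]
    · intro T hT
      rw [mem_powersetCard] at hT
      refine ⟨fdef T hT.2, ?_, jumpSet_fdef T hT.2⟩
      simp only [mem_filter, mem_univ, true_and]
      exact ⟨fdef_mono T hT.2, fdef_surj T hT.2⟩
  rw [key, card_powersetCard, card_univ, Fintype.card_fin]

end Surj


/-- Count of monotone maps into a fixed finset. -/
lemma card_mono_into (p m : ℕ) (A : Finset (Fin p)) :
    (univ.filter fun f : Fin m → Fin p => Monotone f ∧ ∀ i, f i ∈ A).card
      = (A.card + m - 1).choose m := by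
  have e : {f : Fin m → Fin p // Monotone f ∧ ∀ i, f i ∈ A}
      ≃ {g : Fin m → ↥A // Monotone g} := {
    toFun := fun f => ⟨fun i => ⟨f.1 i, f.2.2 i⟩, fun i j hij => by
      simp only [Subtype.mk_le_mk]
      exact f.2.1 hij⟩
    invFun := fun g => ⟨fun i => (g.1 i : Fin p), fun i j hij => g.2 hij, fun i => (g.1 i).2⟩
    left_inv := fun f => rfl
    right_inv := fun g => rfl }
  rw [← Fintype.card_subtype, Fintype.card_congr e, card_monotone_maps, Fintype.card_coe]

/-- Count of monotone maps with image exactly `B`. -/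
lemma card_mono_image (p n : ℕ) (hn : 1 ≤ n) (B : Finset (Fin p)) (hB : 1 ≤ B.card) :
    (univ.filter fun f : Fin n → Fin p => Monotone f ∧ image f univ = B).card
      = (n - 1).choose (B.card - 1) := by
  obtain ⟨n', rfl⟩ : ∃ n', n = n' + 1 := ⟨n - 1, by omega⟩
  obtain ⟨l', hl⟩ : ∃ l', B.card = l' + 1 := ⟨B.card - 1, by omega⟩
  have eIso : Fin (l' + 1) ≃o ↥B := B.orderIsoOfFin hl
  have e : {f : Fin (n'+1) → Fin p // Monotone f ∧ image f univ = B}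
      ≃ {g : Fin (n'+1) → Fin (l'+1) // Monotone g ∧ Function.Surjective g} := {
    toFun := fun f => ⟨fun i => eIso.symm ⟨f.1 i, by
        have := mem_image_of_mem f.1 (mem_univ i); rwa [f.2.2] at this⟩, by
      constructor
      · intro i j hij
        apply eIso.symm.monotone
        exact f.2.1 hij
      · intro y
        have hmem : ((eIso y : ↥B) : Fin p) ∈ image f.1 univ := by
          rw [f.2.2]; exact (eIso y).2
        obtain ⟨i, -, hi⟩ := mem_image.mp hmem
        refine ⟨i, ?_⟩
        dsimp only
        calc eIso.symm ⟨f.1 i, _⟩ = eIso.symm (eIso y) := congrArg _ (Subtype.ext hi)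
          _ = y := eIso.symm_apply_apply y⟩
    invFun := fun g => ⟨fun i => ((eIso (g.1 i) : ↥B) : Fin p), by
      constructor
      · intro i j hij
        exact eIso.monotone (g.2.1 hij)
      · apply Finset.Subset.antisymm
        · intro x hx
          obtain ⟨i, -, hi⟩ := mem_image.mp hx
          rw [← hi]
          exact (eIso (g.1 i)).2
        · intro b hb
          obtain ⟨y, hy⟩ := g.2.2 (eIso.symm ⟨b, hb⟩)
          refine mem_image.mpr ⟨y, mem_univ y, ?_⟩
          rw [hy, OrderIso.apply_symm_apply]⟩
    left_inv := fun f => by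
      apply Subtype.ext
      funext i
      dsimp only
      rw [OrderIso.apply_symm_apply]
    right_inv := fun g => by
      apply Subtype.ext
      funext i
      dsimp only
      calc eIso.symm ⟨_, _⟩ = eIso.symm (eIso (g.1 i)) := congrArg _ (Subtype.coe_eta _ _)
        _ = g.1 i := eIso.symm_apply_apply _ }
  have h1 : (univ.filter fun f : Fin (n'+1) → Fin p =>
      Monotone f ∧ image f univ = B).card
      = (univ.filter fun g : Fin (n'+1) → Fin (l'+1) =>
        Monotone g ∧ Function.Surjective g).card := by
    rw [← Fintype.card_subtype, ← Fintype.card_subtype]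
    exact Fintype.card_congr e
  rw [h1, card_mono_surj, hl]
  simp

theorem stmt_14 (p m n : ℕ) (hp : p.Prime) (hm : 1 ≤ m) (hn : 1 ≤ n) :
    (Finset.univ.filter (fun ab : (Fin m → Fin p) × (Fin n → Fin p) =>
        (∀ i : Fin m, 0 < (ab.1 i : ℕ)) ∧
        (∀ j : Fin n, 0 < (ab.2 j : ℕ)) ∧
        (∀ i j : Fin m, i ≤ j → ab.1 i ≤ ab.1 j) ∧
        (∀ i j : Fin n, i ≤ j → ab.2 i ≤ ab.2 j) ∧
        ∀ (i : Fin m) (j : Fin n), ¬ p ∣ ((ab.1 i : ℕ) + (ab.2 j : ℕ)))).card =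
      ∑ l ∈ Finset.Icc 1 (min n (p - 2)),
        Nat.choose (p - 1) l * Nat.choose (n - 1) (n - l) *
          Nat.choose (m + p - l - 2) m := by
  haveI : NeZero p := ⟨hp.ne_zero⟩
  have hp2 : 2 ≤ p := hp.two_le
  have hdvd : ∀ x y : Fin p, p ∣ ((x : ℕ) + (y : ℕ)) ↔ x = -y := by
    intro x y
    rw [eq_neg_iff_add_eq_zero, Fin.ext_iff, Fin.val_add, Fin.val_zero,
      ← Nat.dvd_iff_mod_eq_zero]
  set S := (Finset.univ.filter (fun ab : (Fin m → Fin p) × (Fin n → Fin p) =>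
        (∀ i : Fin m, 0 < (ab.1 i : ℕ)) ∧
        (∀ j : Fin n, 0 < (ab.2 j : ℕ)) ∧
        (∀ i j : Fin m, i ≤ j → ab.1 i ≤ ab.1 j) ∧
        (∀ i j : Fin n, i ≤ j → ab.2 i ≤ ab.2 j) ∧
        ∀ (i : Fin m) (j : Fin n), ¬ p ∣ ((ab.1 i : ℕ) + (ab.2 j : ℕ)))) with hS
  set V : Finset (Finset (Fin p)) :=
    univ.filter (fun B => B.Nonempty ∧ (0 : Fin p) ∉ B) with hV
  have hmaps : ∀ ab ∈ S, image ab.2 univ ∈ V := by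
    intro ab hab
    rw [hS, mem_filter] at hab
    obtain ⟨-, -, hb0, -, -, -⟩ := hab
    rw [hV, mem_filter]
    refine ⟨mem_univ _, ⟨ab.2 ⟨0, hn⟩, mem_image_of_mem _ (mem_univ _)⟩, ?_⟩
    intro hc
    obtain ⟨j, -, hj⟩ := mem_image.mp hc
    have := hb0 j
    rw [hj] at this
    simp at this
  rw [card_eq_sum_card_fiberwise hmaps]
  -- fiber computation
  have hfiber : ∀ B ∈ V, (S.filter fun ab => image ab.2 univ = B).card
      = ((p - B.card - 1) + m - 1).choose m * (n - 1).choose (B.card - 1) := by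
    intro B hB
    rw [hV, mem_filter] at hB
    obtain ⟨-, hBne, hB0⟩ := hB
    set A : Finset (Fin p) := univ \ insert 0 (B.image (fun x => -x)) with hA
    have hmemA : ∀ x : Fin p, x ∈ A ↔ x ≠ 0 ∧ ∀ b ∈ B, x ≠ -b := by
      intro x
      rw [hA, mem_sdiff, mem_insert]
      simp only [mem_univ, true_and, mem_image, not_or, not_exists]
      constructor
      · rintro ⟨h1, h2⟩
        exact ⟨h1, fun b hb hc => h2 b ⟨hb, hc.symm⟩⟩
      · rintro ⟨h1, h2⟩
        exact ⟨h1, fun b hb => (h2 b hb.1) hb.2.symm⟩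
    have hpred : S.filter (fun ab => image ab.2 univ = B) =
        univ.filter (fun ab : (Fin m → Fin p) × (Fin n → Fin p) =>
          (Monotone ab.1 ∧ ∀ i, ab.1 i ∈ A) ∧
          (Monotone ab.2 ∧ image ab.2 univ = B)) := by
      rw [hS, filter_filter]
      apply filter_congr
      intro ab _
      constructor
      · rintro ⟨⟨ha0, hb0, hamono, hbmono, hnd⟩, himg⟩
        refine ⟨⟨fun i j hij => hamono i j hij, fun i => ?_⟩,
          fun i j hij => hbmono i j hij, himg⟩
        rw [hmemA]
        constructor
        · intro hc
          have := ha0 i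
          rw [hc] at this
          simp at this
        · intro b hb hc
          rw [← himg] at hb
          obtain ⟨j, -, hj⟩ := mem_image.mp hb
          exact hnd i j ((hdvd _ _).mpr (hj ▸ hc))
      · rintro ⟨⟨hamono, haA⟩, hbmono, himg⟩
        refine ⟨⟨fun i => ?_, fun j => ?_, fun i j hij => hamono hij,
          fun i j hij => hbmono hij, fun i j hc => ?_⟩, himg⟩
        · have := ((hmemA _).mp (haA i)).1
          rcases Nat.eq_zero_or_pos (ab.1 i : ℕ) with h | h
          · exact absurd (Fin.ext h) this
          · exact h
        · have hj : ab.2 j ∈ B := himg ▸ mem_image_of_mem _ (mem_univ j)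
          have : ab.2 j ≠ 0 := fun hc => hB0 (hc ▸ hj)
          rcases Nat.eq_zero_or_pos (ab.2 j : ℕ) with h | h
          · exact absurd (Fin.ext h) this
          · exact h
        · have hj : ab.2 j ∈ B := himg ▸ mem_image_of_mem _ (mem_univ j)
          exact ((hmemA _).mp (haA i)).2 _ hj ((hdvd _ _).mp hc)
    rw [hpred]
    have hsplit : (univ.filter (fun ab : (Fin m → Fin p) × (Fin n → Fin p) =>
        (Monotone ab.1 ∧ ∀ i, ab.1 i ∈ A) ∧ (Monotone ab.2 ∧ image ab.2 univ = B)))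
        = (univ.filter (fun a : Fin m → Fin p => Monotone a ∧ ∀ i, a i ∈ A)) ×ˢ
          (univ.filter (fun b : Fin n → Fin p => Monotone b ∧ image b univ = B)) := by
      ext ab
      simp only [mem_filter, mem_product, mem_univ, true_and]
    rw [hsplit, Finset.card_product, card_mono_into,
      card_mono_image p n hn B (Nat.one_le_iff_ne_zero.mpr
        (Finset.card_ne_zero_of_mem hBne.choose_spec))]
    have hAcard : A.card = p - B.card - 1 := by
      rw [hA, card_sdiff_of_subset (subset_univ _), card_univ, Fintype.card_fin,
        card_insert_of_notMem, card_image_of_injective _ neg_injective]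
      · omega
      · intro hc
        obtain ⟨x, hx, hx0⟩ := mem_image.mp hc
        rw [neg_eq_zero] at hx0
        exact hB0 (hx0 ▸ hx)
    rw [hAcard]
  rw [Finset.sum_congr rfl hfiber]
  -- group by cardinality
  have hVcard : ∀ B ∈ V, B.card ∈ Finset.Icc 1 (p - 1) := by
    intro B hB
    rw [hV, mem_filter] at hB
    obtain ⟨-, hBne, hB0⟩ := hB
    rw [Finset.mem_Icc]
    constructor
    · exact Nat.one_le_iff_ne_zero.mpr (Finset.card_ne_zero_of_mem hBne.choose_spec)
    · have hsub : B ⊆ (univ : Finset (Fin p)).erase 0 := by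
        intro b hb
        exact mem_erase.mpr ⟨fun hc => hB0 (hc ▸ hb), mem_univ b⟩
      have := card_le_card hsub
      rwa [card_erase_of_mem (mem_univ _), card_univ, Fintype.card_fin] at this
  rw [← Finset.sum_fiberwise_of_maps_to hVcard
    (fun B => ((p - B.card - 1) + m - 1).choose m * (n - 1).choose (B.card - 1))]
  have hinner : ∀ l ∈ Finset.Icc 1 (p - 1),
      (∑ B ∈ V.filter (fun B => B.card = l),
        ((p - B.card - 1) + m - 1).choose m * (n - 1).choose (B.card - 1))
      = (p - 1).choose l * (((p - l - 1) + m - 1).choose m * (n - 1).choose (l - 1)) := by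
    intro l hl
    rw [Finset.mem_Icc] at hl
    have hfilt : V.filter (fun B => B.card = l)
        = powersetCard l ((univ : Finset (Fin p)).erase 0) := by
      ext B
      rw [mem_filter, hV, mem_filter, mem_powersetCard]
      constructor
      · rintro ⟨⟨-, hBne, hB0⟩, hcard⟩
        exact ⟨fun b hb => mem_erase.mpr ⟨fun hc => hB0 (hc ▸ hb), mem_univ b⟩, hcard⟩
      · rintro ⟨hsub, hcard⟩
        refine ⟨⟨mem_univ _, ?_, ?_⟩, hcard⟩
        · rw [← card_pos, hcard]; omega
        · intro hc
          exact absurd (hsub hc) (by simp)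
    have hconst : (∑ B ∈ powersetCard l ((univ : Finset (Fin p)).erase 0),
        ((p - B.card - 1) + m - 1).choose m * (n - 1).choose (B.card - 1))
        = ∑ _B ∈ powersetCard l ((univ : Finset (Fin p)).erase 0),
          ((p - l - 1) + m - 1).choose m * (n - 1).choose (l - 1) := by
      apply Finset.sum_congr rfl
      intro B hB
      rw [mem_powersetCard] at hB
      rw [hB.2]
    rw [hfilt, hconst, Finset.sum_const, smul_eq_mul, card_powersetCard,
      card_erase_of_mem (mem_univ _), card_univ, Fintype.card_fin]
  rw [Finset.sum_congr rfl hinner]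
  -- final index/term manipulation
  have hsub : Finset.Icc 1 (min n (p - 2)) ⊆ Finset.Icc 1 (p - 1) := by
    apply Finset.Icc_subset_Icc le_rfl
    omega
  rw [← Finset.sum_subset hsub]
  · apply Finset.sum_congr rfl
    intro l hl
    rw [Finset.mem_Icc] at hl
    obtain ⟨hl1, hl2⟩ := hl
    have hln : l ≤ n := le_trans hl2 (min_le_left _ _)
    have hlp : l ≤ p - 2 := le_trans hl2 (min_le_right _ _)
    have e1 : (p - l - 1) + m - 1 = m + p - l - 2 := by omega
    have e2 : (n - 1).choose (l - 1) = (n - 1).choose (n - l) := by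
      have : n - l = (n - 1) - (l - 1) := by omega
      rw [this, Nat.choose_symm (by omega)]
    rw [e1, e2]
    ring
  · intro l hl hnot
    rw [Finset.mem_Icc] at hl
    rw [Finset.mem_Icc, not_and_or] at hnot
    have hcase : n < l ∨ l = p - 1 := by omega
    rcases hcase with h | h
    · have : (n - 1).choose (l - 1) = 0 := Nat.choose_eq_zero_of_lt (by omega)
      rw [this]
      ring
    · have : ((p - l - 1) + m - 1).choose m = 0 := by
        apply Nat.choose_eq_zero_of_lt
        omega
      rw [this]
      ring
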